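/- Consider the 3×3 matrix Λ(ε,κ) = [[−2+ε, ε, 8+ε], [1+ε, 3+ε−κ, 1+ε], [ε, 4+ε, −1+ε]]. For ε = 0.001 and κ = 33, the matrix Λ is Hurwitz, i.e., all its eigenvalues have strictly negative real part. -/

import Mathlib

open Matrix

lemma cnorm_neg_aux (x : ℝ) (hx : 0 ≤ x) : ‖((↑(-x)) : ℂ)‖ = x := by
  rw [Complex.norm_real, Real.norm_eq_abs, abs_neg, abs_of_nonneg hx]

theorem stmt_14 :
    let ε : ℝ := 0.001
    let κ : ℝ := 33
    let Λ : Matrix (Fin 3) (Fin 3) ℝ :=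
      !![-2 + ε, ε, 8 + ε; 1 + ε, 3 + ε - κ, 1 + ε; ε, 4 + ε, -1 + ε]
    ∀ μ : ℂ, μ ∈ spectrum ℂ (Λ.map ((↑·) : ℝ → ℂ)) → μ.re < 0 := by
  intro ε κ Λ μ hμ
  by_contra hre
  push_neg at hre
  set M : Matrix (Fin 3) (Fin 3) ℂ := Λ.map ((↑·) : ℝ → ℂ) with hM
  rw [spectrum.mem_iff] at hμ
  set N : Matrix (Fin 3) (Fin 3) ℂ := algebraMap ℂ _ μ - M with hN
  have hdetN : N.det = 0 := by
    by_contra hd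
    exact hμ ((Matrix.isUnit_iff_isUnit_det N).mpr (isUnit_iff_ne_zero.mpr hd))
  set d : Fin 3 → ℂ := ![33/2, 1, 41/10] with hd
  set e : Fin 3 → ℂ := ![2/33, 1, 10/41] with he
  set C : Matrix (Fin 3) (Fin 3) ℂ := diagonal e * N * diagonal d with hC
  have hdetC : C.det = 0 := by
    simp [hC, Matrix.det_mul, hdetN]
  refine absurd hdetC (det_ne_zero_of_sum_row_lt_diag ?_)
  have hCkj : ∀ k j, C k j = e k * N k j * d j := by
    intro k j
    simp [hC, Matrix.diagonal_mul, Matrix.mul_diagonal, Matrix.mul_apply,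
      Matrix.diagonal_apply, Finset.sum_ite_eq, Finset.sum_ite_eq']
  have hNkk : ∀ k, N k k = μ - M k k := by
    intro k; simp [hN, Matrix.algebraMap_matrix_apply]
  have hNoff : ∀ k j, k ≠ j → N k j = -M k j := by
    intro k j h; simp [hN, Matrix.algebraMap_matrix_apply, h]
  have hMe : ∀ k j, M k j = ((Λ k j : ℝ) : ℂ) := fun k j => rfl
  have hdiag : ∀ k (c : ℝ), Λ k k = -c → e k * d k = 1 → c ≤ ‖C k k‖ := by
    intro k c hΛ hed
    have hc : C k k = μ - ((-c : ℝ) : ℂ) := by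
      rw [hCkj k k, hNkk k, hMe k k, hΛ]
      have h1 : e k * (μ - ((-c : ℝ) : ℂ)) * d k
          = (e k * d k) * (μ - ((-c : ℝ) : ℂ)) := by ring
      rw [h1, hed, one_mul]
    have hle : c ≤ (C k k).re := by
      rw [hc]
      simp [Complex.sub_re, Complex.ofReal_re]
      linarith
    exact hle.trans (Complex.re_le_norm _)
  intro k
  fin_cases k
  · show ∑ j ∈ Finset.univ.erase (0:Fin 3), ‖C 0 j‖ < ‖C 0 0‖
    have h01 : (Finset.univ.erase (0 : Fin 3)) = {1, 2} := by decide
    rw [h01, Finset.sum_insert (by decide), Finset.sum_singleton]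
    have n1 : ‖C 0 1‖ = 2/33 * 0.001 * 1 := by
      have : C 0 1 = ((↑(-(2/33 * 0.001 * 1)) : ℝ) : ℂ) := by
        rw [hCkj 0 1, hNoff 0 1 (by decide), hMe 0 1]
        simp [Λ, he, hd, ε, κ, Complex.ext_iff]
        all_goals norm_num
      rw [this, cnorm_neg_aux _ (by norm_num)]
    have n2 : ‖C 0 2‖ = 2/33 * 8.001 * (41/10) := by
      have : C 0 2 = ((↑(-(2/33 * 8.001 * (41/10))) : ℝ) : ℂ) := by
        rw [hCkj 0 2, hNoff 0 2 (by decide), hMe 0 2]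
        simp [Λ, he, hd, ε, κ, Complex.ext_iff]
        all_goals norm_num
      rw [this, cnorm_neg_aux _ (by norm_num)]
    have hD : (1.999 : ℝ) ≤ ‖C 0 0‖ := by
      refine hdiag 0 1.999 ?_ ?_
      · simp [Λ, ε]; try norm_num
      · simp [he, hd]; try norm_num
    rw [n1, n2]
    calc 2/33 * 0.001 * 1 + 2/33 * 8.001 * (41/10) < 1.999 := by norm_num
    _ ≤ ‖C 0 0‖ := hD
  · show ∑ j ∈ Finset.univ.erase (1:Fin 3), ‖C 1 j‖ < ‖C 1 1‖
    have h01 : (Finset.univ.erase (1 : Fin 3)) = {0, 2} := by decide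
    rw [h01, Finset.sum_insert (by decide), Finset.sum_singleton]
    have n1 : ‖C 1 0‖ = 1 * 1.001 * (33/2) := by
      have : C 1 0 = ((↑(-(1 * 1.001 * (33/2))) : ℝ) : ℂ) := by
        rw [hCkj 1 0, hNoff 1 0 (by decide), hMe 1 0]
        simp [Λ, he, hd, ε, κ, Complex.ext_iff]
        all_goals norm_num
      rw [this, cnorm_neg_aux _ (by norm_num)]
    have n2 : ‖C 1 2‖ = 1 * 1.001 * (41/10) := by
      have : C 1 2 = ((↑(-(1 * 1.001 * (41/10))) : ℝ) : ℂ) := by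
        rw [hCkj 1 2, hNoff 1 2 (by decide), hMe 1 2]
        simp [Λ, he, hd, ε, κ, Complex.ext_iff]
        all_goals norm_num
      rw [this, cnorm_neg_aux _ (by norm_num)]
    have hD : (29.999 : ℝ) ≤ ‖C 1 1‖ := by
      refine hdiag 1 29.999 ?_ ?_
      · simp [Λ, ε, κ]; norm_num
      · simp [he, hd]
    rw [n1, n2]
    calc 1 * 1.001 * (33/2) + 1 * 1.001 * (41/10) < 29.999 := by norm_num
    _ ≤ ‖C 1 1‖ := hD
  · show ∑ j ∈ Finset.univ.erase (2:Fin 3), ‖C 2 j‖ < ‖C 2 2‖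
    have h01 : (Finset.univ.erase (2 : Fin 3)) = {0, 1} := by decide
    rw [h01, Finset.sum_insert (by decide), Finset.sum_singleton]
    have n1 : ‖C 2 0‖ = 10/41 * 0.001 * (33/2) := by
      have : C 2 0 = ((↑(-(10/41 * 0.001 * (33/2))) : ℝ) : ℂ) := by
        rw [hCkj 2 0, hNoff 2 0 (by decide), hMe 2 0]
        simp [Λ, he, hd, ε, κ, Complex.ext_iff]
        all_goals norm_num
      rw [this, cnorm_neg_aux _ (by norm_num)]
    have n2 : ‖C 2 1‖ = 10/41 * 4.001 * 1 := by
      have : C 2 1 = ((↑(-(10/41 * 4.001 * 1)) : ℝ) : ℂ) := by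
        rw [hCkj 2 1, hNoff 2 1 (by decide), hMe 2 1]
        simp [Λ, he, hd, ε, κ, Complex.ext_iff]
        all_goals norm_num
      rw [this, cnorm_neg_aux _ (by norm_num)]
    have hD : (0.999 : ℝ) ≤ ‖C 2 2‖ := by
      refine hdiag 2 0.999 ?_ ?_
      · simp [Λ, ε]; try norm_num
      · simp [he, hd]; try norm_num
    rw [n1, n2]
    calc 10/41 * 0.001 * (33/2) + 10/41 * 4.001 * 1 < 0.999 := by norm_num
    _ ≤ ‖C 2 2‖ := hD
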